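/- Two finite groups G and H have the same orbit-counting sequence for simultaneous conjugation (i.e., α_{G,n} = α_{H,n} for all n ≥ 0) if and only if for every positive integer m, the number of elements of G with centralizer of cardinality m equals the number of elements of H with centralizer of cardinality m. -/
import Mathlib


/-- Number of orbits of `G` acting on `G^n` by simultaneous conjugation. -/
noncomputable def alphaOrbits (G : Type*) [Group G] (n : ℕ) : ℕ :=
  Nat.card (Quotient (MulAction.orbitRel (ConjAct G) (Fin n → G)))

/-- Pairwise commuting `n`-tuples as a sub-`MulAction` of the conjugation action. -/
def commTuples (G : Type*) [Group G] (n : ℕ) : SubMulAction (ConjAct G) (Fin n → G) where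
  carrier := {x | ∀ i j, Commute (x i) (x j)}
  smul_mem' := by
    intro g x hx i j
    have h := (hx i j).map (MulAut.conj (ConjAct.ofConjAct g)).toMonoidHom
    simpa [ConjAct.smul_def, MulAut.conj_apply, mul_assoc] using h

/-- Number of orbits of `G` acting on pairwise-commuting `n`-tuples by
simultaneous conjugation. -/
noncomputable def betaOrbits (G : Type*) [Group G] (n : ℕ) : ℕ :=
  Nat.card (Quotient (MulAction.orbitRel (ConjAct G) (commTuples G n)))

open Finset Polynomial

/-- If all power sums of a finitely supported integer-valued function vanish,
the function vanishes (Vandermonde-type argument via interpolation polynomials). -/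
lemma powerSum_eq_zero {S : Finset ℕ} {c : ℕ → ℤ}
    (h : ∀ n : ℕ, ∑ m ∈ S, c m * (m : ℤ) ^ n = 0) : ∀ m ∈ S, c m = 0 := by
  classical
  intro m0 hm0
  set P : ℤ[X] := ∏ m ∈ S.erase m0, (X - C (m : ℤ)) with hP
  have hev : ∀ x : ℤ, P.eval x = ∏ m ∈ S.erase m0, (x - (m : ℤ)) := by
    intro x; simp [hP, eval_prod]
  have hsum : ∑ m ∈ S, c m * P.eval (m : ℤ) = 0 := by
    have hterm : ∀ m ∈ S, c m * P.eval (m : ℤ) =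
        ∑ i ∈ Finset.range (P.natDegree + 1), P.coeff i * (c m * (m : ℤ) ^ i) := by
      intro m _
      rw [Polynomial.eval_eq_sum_range, Finset.mul_sum]
      exact Finset.sum_congr rfl fun i _ => by ring
    rw [Finset.sum_congr rfl hterm, Finset.sum_comm]
    refine Finset.sum_eq_zero fun i _ => ?_
    rw [← Finset.mul_sum, h i, mul_zero]
  have hsingle : ∑ m ∈ S, c m * P.eval (m : ℤ) = c m0 * P.eval (m0 : ℤ) := by
    refine Finset.sum_eq_single m0 (fun m hm hne => ?_) (fun h' => absurd hm0 h')
    rw [hev, Finset.prod_eq_zero (Finset.mem_erase.mpr ⟨hne, hm⟩) (by simp), mul_zero]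
  have hne : P.eval (m0 : ℤ) ≠ 0 := by
    rw [hev]
    refine Finset.prod_ne_zero_iff.mpr fun m hm hc => ?_
    have h1 : m ≠ m0 := (Finset.mem_erase.mp hm).1
    have : (m0 : ℤ) = (m : ℤ) := sub_eq_zero.mp hc
    exact h1 (Nat.cast_injective this).symm
  have := hsingle ▸ hsum
  rcases mul_eq_zero.mp this with h' | h'
  · exact h'
  · exact absurd h' hne

/-- The size of the centralizer of an element. -/
noncomputable def cw {G : Type*} [Group G] (g : G) : ℕ :=
  Nat.card (Subgroup.centralizer ({g} : Set G))

section Group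

variable (G : Type*) [Group G] [Fintype G]

lemma cw_le (g : G) : cw g ≤ Fintype.card G := by
  have := Subgroup.card_le_card_group (Subgroup.centralizer ({g} : Set G))
  simpa [cw, Nat.card_eq_fintype_card] using this

lemma cw_pos (g : G) : 0 < cw g := Nat.card_pos

lemma cw_one : cw (1 : G) = Fintype.card G := by
  have h : Subgroup.centralizer ({(1 : G)} : Set G) = ⊤ := by
    ext x; simp [Subgroup.mem_centralizer_singleton_iff]
  rw [cw, h, Subgroup.card_top, Nat.card_eq_fintype_card]

/-- Burnside's lemma for simultaneous conjugation: the orbit count times the group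
order equals the sum of `n`-th powers of centralizer sizes. -/
lemma alpha_mul_card (n : ℕ) :
    alphaOrbits G n * Fintype.card G = ∑ g : G, cw g ^ n := by
  classical
  letI : Fintype (Quotient (MulAction.orbitRel (ConjAct G) (Fin n → G))) :=
    Fintype.ofFinite _
  have key := MulAction.sum_card_fixedBy_eq_card_orbits_mul_card_group
    (ConjAct G) (Fin n → G)
  have hfix : ∀ a : ConjAct G, Fintype.card (MulAction.fixedBy (Fin n → G) a)
      = cw (ConjAct.ofConjAct a) ^ n := by
    intro a
    have hiff : ∀ x : Fin n → G, a • x = x ↔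
        ∀ i, x i ∈ Subgroup.centralizer ({ConjAct.ofConjAct a} : Set G) := by
      intro x
      rw [funext_iff]
      refine forall_congr' fun i => ?_
      rw [Pi.smul_apply, ConjAct.smul_def, Subgroup.mem_centralizer_singleton_iff,
        mul_inv_eq_iff_eq_mul, eq_comm]
    have e : MulAction.fixedBy (Fin n → G) a ≃
        (Fin n → Subgroup.centralizer ({ConjAct.ofConjAct a} : Set G)) :=
      { toFun := fun x i => ⟨x.1 i, ((hiff x.1).mp x.2) i⟩
        invFun := fun f => ⟨fun i => (f i : G), (hiff _).mpr fun i => (f i).2⟩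
        left_inv := fun x => rfl
        right_inv := fun f => rfl }
    rw [Fintype.card_congr e, Fintype.card_fun, Fintype.card_fin, cw,
      Nat.card_eq_fintype_card]
  have hsum : (∑ a : ConjAct G, Fintype.card (MulAction.fixedBy (Fin n → G) a))
      = ∑ g : G, cw g ^ n := by
    rw [Finset.sum_congr rfl fun a _ => hfix a]
    exact Fintype.sum_equiv ConjAct.ofConjAct.toEquiv _ _ fun a => rfl
  have hcard : Fintype.card (ConjAct G) = Fintype.card G := rfl
  rw [← hsum, key, hcard, alphaOrbits, Nat.card_eq_fintype_card]

/-- Regroup a sum over group elements according to centralizer size. -/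
lemma sum_cnt_mul {N : ℕ} (hN : Fintype.card G ≤ N) (f : ℕ → ℕ) :
    ∑ m ∈ Finset.range (N + 1), Nat.card {g : G // cw g = m} * f m
      = ∑ g : G, f (cw g) := by
  classical
  have hmap : ∀ g ∈ (Finset.univ : Finset G), cw g ∈ Finset.range (N + 1) := by
    intro g _
    exact Finset.mem_range.mpr (Nat.lt_succ_of_le ((cw_le G g).trans hN))
  rw [← Finset.sum_fiberwise_of_maps_to hmap (fun g => f (cw g))]
  refine Finset.sum_congr rfl fun m _ => ?_
  have h1 : ∑ g ∈ Finset.univ.filter (fun g : G => cw g = m), f (cw g)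
      = ∑ _g ∈ Finset.univ.filter (fun g : G => cw g = m), f m := by
    refine Finset.sum_congr rfl fun g hg => ?_
    rw [(Finset.mem_filter.mp hg).2]
  rw [h1, Finset.sum_const, smul_eq_mul]
  congr 1
  rw [Nat.card_eq_fintype_card, Fintype.card_subtype]

lemma cnt_zero_of_gt {m : ℕ} (hm : Fintype.card G < m) :
    Nat.card {g : G // cw g = m} = 0 := by
  have : IsEmpty {g : G // cw g = m} := by
    refine ⟨fun x => ?_⟩
    exact absurd (x.2 ▸ cw_le G x.1) (not_le.mpr hm)
  exact Nat.card_of_isEmpty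

lemma cnt_zero_zero : Nat.card {g : G // cw g = 0} = 0 := by
  have : IsEmpty {g : G // cw g = 0} := by
    refine ⟨fun x => ?_⟩
    exact absurd (x.2 ▸ cw_pos G x.1) (lt_irrefl 0)
  exact Nat.card_of_isEmpty

lemma cnt_card_pos : 0 < Nat.card {g : G // cw g = Fintype.card G} := by
  have : Nonempty {g : G // cw g = Fintype.card G} := ⟨⟨1, cw_one G⟩⟩
  exact Nat.card_pos

/-- `alphaOrbits` in terms of the class-equation data. -/
lemma sum_cnt_pow {N : ℕ} (hN : Fintype.card G ≤ N) (n : ℕ) :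
    ∑ m ∈ Finset.range (N + 1), Nat.card {g : G // cw g = m} * m ^ n
      = alphaOrbits G n * Fintype.card G := by
  rw [sum_cnt_mul G hN (fun m => m ^ n), alpha_mul_card]

lemma sum_cnt {N : ℕ} (hN : Fintype.card G ≤ N) :
    ∑ m ∈ Finset.range (N + 1), Nat.card {g : G // cw g = m} = Fintype.card G := by
  have := sum_cnt_mul G hN (fun _ => 1)
  simpa using this

end Group

/-- Two finite groups have the same sequence of simultaneous-conjugacy orbit counts
iff they have the same number of elements with centralizer of each cardinality. -/
theorem orbit_counts_eq_iff_class_equation_eq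
    (G H : Type*) [Group G] [Fintype G] [Group H] [Fintype H] :
    (∀ n : ℕ, alphaOrbits G n = alphaOrbits H n) ↔
      ∀ m : ℕ, 0 < m →
        Nat.card {g : G // Nat.card (Subgroup.centralizer ({g} : Set G)) = m} =
          Nat.card {h : H // Nat.card (Subgroup.centralizer ({h} : Set H)) = m} := by
  have hGpos : 0 < Fintype.card G := Fintype.card_pos
  have hHpos : 0 < Fintype.card H := Fintype.card_pos
  set N := max (Fintype.card G) (Fintype.card H) with hNdef
  have hNG : Fintype.card G ≤ N := le_max_left _ _
  have hNH : Fintype.card H ≤ N := le_max_right _ _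
  constructor
  · intro halpha
    -- The key linear-algebra step: all power sums agree, hence weighted counts agree.
    set c : ℕ → ℤ := fun m =>
      (Fintype.card H : ℤ) * Nat.card {g : G // cw g = m}
        - (Fintype.card G : ℤ) * Nat.card {h : H // cw h = m} with hc
    have hps : ∀ n : ℕ, ∑ m ∈ Finset.range (N + 1), c m * (m : ℤ) ^ n = 0 := by
      intro n
      have hGsum := sum_cnt_pow G hNG n
      have hHsum := sum_cnt_pow H hNH n
      have : ∑ m ∈ Finset.range (N + 1), c m * (m : ℤ) ^ n
          = (Fintype.card H : ℤ) *
              (∑ m ∈ Finset.range (N + 1), (Nat.card {g : G // cw g = m} : ℤ) * (m : ℤ) ^ n)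
            - (Fintype.card G : ℤ) *
              (∑ m ∈ Finset.range (N + 1), (Nat.card {h : H // cw h = m} : ℤ) * (m : ℤ) ^ n) := by
        rw [Finset.mul_sum, Finset.mul_sum, ← Finset.sum_sub_distrib]
        exact Finset.sum_congr rfl fun m _ => by simp [hc]; ring
      rw [this]
      have hGsum' : (∑ m ∈ Finset.range (N + 1),
          (Nat.card {g : G // cw g = m} : ℤ) * (m : ℤ) ^ n)
          = (alphaOrbits G n * Fintype.card G : ℕ) := by
        rw [← hGsum]; push_cast; rfl
      have hHsum' : (∑ m ∈ Finset.range (N + 1),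
          (Nat.card {h : H // cw h = m} : ℤ) * (m : ℤ) ^ n)
          = (alphaOrbits H n * Fintype.card H : ℕ) := by
        rw [← hHsum]; push_cast; rfl
      rw [hGsum', hHsum', halpha n]
      push_cast
      ring
    have hkey : ∀ m ∈ Finset.range (N + 1),
        (Fintype.card H : ℤ) * Nat.card {g : G // cw g = m}
          = (Fintype.card G : ℤ) * Nat.card {h : H // cw h = m} := by
      intro m hm
      have h := powerSum_eq_zero hps m hm
      simp only [hc, sub_eq_zero] at h
      exact h
    -- deduce the two groups have the same order
    have hGH : Fintype.card G = Fintype.card H := by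
      have h1 : 0 < Nat.card {h : H // cw h = Fintype.card G} := by
        have := hkey (Fintype.card G) (Finset.mem_range.mpr (Nat.lt_succ_of_le hNG))
        by_contra h0
        have h0' : Nat.card {h : H // cw h = Fintype.card G} = 0 := Nat.le_zero.mp (not_lt.mp h0)
        rw [h0', Nat.cast_zero, mul_zero] at this
        have := mul_eq_zero.mp this
        rcases this with h' | h'
        · exact absurd h' (by positivity)
        · have : (0 : ℤ) < Nat.card {g : G // cw g = Fintype.card G} := by
            exact_mod_cast cnt_card_pos G
          omega
      have h2 : 0 < Nat.card {g : G // cw g = Fintype.card H} := by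
        have := hkey (Fintype.card H) (Finset.mem_range.mpr (Nat.lt_succ_of_le hNH))
        by_contra h0
        have h0' : Nat.card {g : G // cw g = Fintype.card H} = 0 := Nat.le_zero.mp (not_lt.mp h0)
        rw [h0', Nat.cast_zero, mul_zero] at this
        have := mul_eq_zero.mp this.symm
        rcases this with h' | h'
        · exact absurd h' (by positivity)
        · have : (0 : ℤ) < Nat.card {h : H // cw h = Fintype.card H} := by
            exact_mod_cast cnt_card_pos H
          omega
      -- existence of elements with given centralizer size bounds the orders
      have hle1 : Fintype.card G ≤ Fintype.card H := by
        obtain ⟨x⟩ := (Nat.card_pos_iff.mp h1).1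
        calc Fintype.card G = cw x.1 := x.2.symm
          _ ≤ Fintype.card H := cw_le H x.1
      have hle2 : Fintype.card H ≤ Fintype.card G := by
        obtain ⟨x⟩ := (Nat.card_pos_iff.mp h2).1
        calc Fintype.card H = cw x.1 := x.2.symm
          _ ≤ Fintype.card G := cw_le G x.1
      exact le_antisymm hle1 hle2
    intro m _
    show Nat.card {g : G // cw g = m} = Nat.card {h : H // cw h = m}
    by_cases hmN : m ≤ N
    · have := hkey m (Finset.mem_range.mpr (Nat.lt_succ_of_le hmN))
      rw [hGH] at this
      have := mul_left_cancel₀ (a := (Fintype.card H : ℤ))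
        (by exact_mod_cast hHpos.ne') this
      exact_mod_cast this
    · rw [cnt_zero_of_gt G (lt_of_le_of_lt hNG (not_le.mp hmN)),
        cnt_zero_of_gt H (lt_of_le_of_lt hNH (not_le.mp hmN))]
  · intro hcnt
    have hcnt' : ∀ m : ℕ, Nat.card {g : G // cw g = m} = Nat.card {h : H // cw h = m} := by
      intro m
      rcases Nat.eq_zero_or_pos m with rfl | hm
      · rw [cnt_zero_zero G, cnt_zero_zero H]
      · exact hcnt m hm
    have hGH : Fintype.card G = Fintype.card H := by
      rw [← sum_cnt G hNG, ← sum_cnt H hNH]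
      exact Finset.sum_congr rfl fun m _ => hcnt' m
    intro n
    have h1 := sum_cnt_pow G hNG n
    have h2 := sum_cnt_pow H hNH n
    have h3 : ∑ m ∈ Finset.range (N + 1), Nat.card {g : G // cw g = m} * m ^ n
        = ∑ m ∈ Finset.range (N + 1), Nat.card {h : H // cw h = m} * m ^ n :=
      Finset.sum_congr rfl fun m _ => by rw [hcnt' m]
    have h4 : alphaOrbits G n * Fintype.card G = alphaOrbits H n * Fintype.card G := by
      rw [← h1, h3, h2, hGH]
    exact Nat.eq_of_mul_eq_mul_right hGpos h4
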